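/- arXiv:2103.08810 — 4 statements merged into one kernel-verified Lean document; each statement's English description precedes it below -/
import Mathlib

section
/- For every integer n ≥ 2 and every ζ ∈ ℝ, the derivative of the generalized Jacobi polynomial of index (−1,−1) satisfies (K_n^{−1,−1})'(ζ) = ((n−1)/2)·J_{n−1}^{0,0}(ζ). -/
open scoped BigOperators

/-- Generalized binomial coefficient `binom(x, k)` for real `x` and natural `k`. -/
noncomputable def genBinom (x : ℝ) (k : ℕ) : ℝ :=
  (∏ i ∈ Finset.range k, (x - (i : ℝ))) / (Nat.factorial k : ℝ)

/-- Jacobi polynomial `J_n^{α,β}(ζ) = Σ_{k=0}^{n} binom(n+α, n−k)·binom(n+β, k)·((ζ−1)/2)^k·((ζ+1)/2)^(n−k)`. -/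
noncomputable def jacobiP (n : ℕ) (α β : ℝ) (ζ : ℝ) : ℝ :=
  ∑ k ∈ Finset.range (n + 1),
    genBinom ((n : ℝ) + α) (n - k) * genBinom ((n : ℝ) + β) k *
      ((ζ - 1) / 2) ^ k * ((ζ + 1) / 2) ^ (n - k)

/-- Generalized Jacobi polynomial of index `(−1,−1)`. -/
noncomputable def K1 : ℕ → ℝ → ℝ
  | 0, ζ => (1 - ζ) / 2
  | 1, ζ => (1 + ζ) / 2
  | (n + 2), ζ => ((ζ ^ 2 - 1) / 4) * jacobiP n 1 1 ζ

lemma genBinom_natCast (N k : ℕ) : genBinom (N : ℝ) k = N.choose k := by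
  induction k with
  | zero => simp [genBinom]
  | succ k ih =>
    have key : ((N.choose (k+1) : ℕ) : ℝ) * (k+1) = (N.choose k : ℝ) * ((N:ℝ) - k) := by
      rcases le_or_gt k N with hk | hk
      · have h := Nat.choose_succ_right_eq N k
        have hc : ((N - k : ℕ) : ℝ) = (N:ℝ) - k := by
          push_cast [Nat.cast_sub hk]; ring
        rw [← hc]
        exact_mod_cast h
      · rw [Nat.choose_eq_zero_of_lt hk, Nat.choose_eq_zero_of_lt (by omega)]
        simp
    have h : genBinom (N:ℝ) (k+1) = genBinom (N:ℝ) k * ((N:ℝ) - k) / (k+1) := by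
      simp only [genBinom, Finset.prod_range_succ, Nat.factorial_succ]
      push_cast
      rw [div_mul_eq_mul_div, div_div]
      rw [mul_comm ((k:ℝ)+1) _]
    rw [h, ih, div_eq_iff (by positivity : ((k:ℝ)+1) ≠ 0)]
    linarith [key]

lemma K1_sum_identity (m : ℕ) (ζ : ℝ) :
    (∑ k ∈ Finset.range (m+1),
        (((m+1).choose (m - k) : ℝ) * ((m+1).choose k)) *
          ((((k+1:ℕ):ℝ) * ((ζ-1)/2)^k * (1/2)) * ((ζ+1)/2)^(m-k+1)
            + ((ζ-1)/2)^(k+1) * (((m-k+1:ℕ):ℝ) * ((ζ+1)/2)^(m-k) * (1/2))))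
      = (((m:ℝ) + 1) / 2) * jacobiP (m + 1) 0 0 ζ := by
  rw [jacobiP]
  simp only [add_zero, genBinom_natCast, Finset.mul_sum]
  simp only [mul_add]
  rw [Finset.sum_add_distrib]
  conv_rhs => rw [Finset.sum_range_succ, Finset.sum_range_succ']
  conv_lhs => rw [Finset.sum_range_succ']
  conv_lhs => rw [Finset.sum_range_succ]
  have hmid : ∀ k ∈ Finset.range m,
      (((m + 1).choose (m - (k + 1)) : ℝ)) * ((m + 1).choose (k + 1)) *
          (((k + 1 + 1 : ℕ) : ℝ) * ((ζ - 1) / 2) ^ (k + 1) * (1 / 2) * ((ζ + 1) / 2) ^ (m - (k + 1) + 1)) +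
        (((m + 1).choose (m - k) : ℝ)) * ((m + 1).choose k) *
          (((ζ - 1) / 2) ^ (k + 1) * (((m - k + 1 : ℕ) : ℝ) * ((ζ + 1) / 2) ^ (m - k) * (1 / 2)))
      = ((m : ℝ) + 1) / 2 *
          ((((m + 1).choose (m + 1 - (k + 1)) : ℝ)) * ((m + 1).choose (k + 1)) * ((ζ - 1) / 2) ^ (k + 1) *
            ((ζ + 1) / 2) ^ (m + 1 - (k + 1))) := by
    intro k hk
    rw [Finset.mem_range] at hk
    rw [show m - (k+1) + 1 = m - k from by omega,
        show m + 1 - (k+1) = m - k from by omega,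
        show m - (k+1) = m + 1 - (k+2) from by omega,
        Nat.choose_symm (show k+2 ≤ m+1 by omega),
        show m - k = m + 1 - (k+1) from by omega,
        Nat.choose_symm (show k+1 ≤ m+1 by omega)]
    have c1 : ((m - k + 1 : ℕ) : ℝ) = (m : ℝ) - k + 1 := by
      rw [Nat.cast_add, Nat.cast_sub (by omega : k ≤ m)]; norm_num
    have c2 : ((k + 1 + 1 : ℕ) : ℝ) = (k : ℝ) + 2 := by push_cast; ring
    rw [show m + 1 - (k+1) = m - k from by omega, c1, c2]
    have f1 : ((m+1).choose (k+2) : ℝ) * ((k:ℝ)+2) = ((m:ℝ)+1) * (m.choose (k+1)) := by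
      exact_mod_cast (Nat.add_one_mul_choose_eq m (k+1)).symm
    have f2 : ((m+1).choose k : ℝ) * ((m:ℝ)-(k:ℝ)+1) = ((m:ℝ)+1) * (m.choose k) := by
      have h1 := Nat.choose_succ_right_eq (m+1) k
      have h2 := Nat.add_one_mul_choose_eq m k
      have hc : ((m + 1 - k : ℕ) : ℝ) = (m : ℝ) - k + 1 := by
        rw [Nat.cast_sub (by omega : k ≤ m + 1)]; push_cast; ring
      have h1' : ((m+1).choose (k+1) : ℝ) * ((k:ℝ)+1) = ((m+1).choose k : ℝ) * ((m:ℝ)-(k:ℝ)+1) := by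
        rw [← hc]; exact_mod_cast h1
      have h2' : ((m:ℝ)+1) * (m.choose k) = ((m+1).choose (k+1) : ℝ) * ((k:ℝ)+1) := by
        exact_mod_cast h2
      rw [h2', h1']
    have f3 : ((m.choose (k+1)):ℝ) + (m.choose k : ℝ) = ((m+1).choose (k+1) : ℝ) := by
      rw [Nat.choose_succ_succ']; push_cast; ring
    linear_combination
      (((ζ-1)/2)^(k+1) * ((ζ+1)/2)^(m-k) * (1/2) * ((m+1).choose (k+1) : ℝ)) * f1
      + (((ζ-1)/2)^(k+1) * ((ζ+1)/2)^(m-k) * (1/2) * ((m+1).choose (k+1) : ℝ)) * f2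
      + (((ζ-1)/2)^(k+1) * ((ζ+1)/2)^(m-k) * (1/2) * ((m:ℝ)+1) * ((m+1).choose (k+1) : ℝ)) * f3
  have hs := Finset.sum_congr rfl hmid
  rw [Finset.sum_add_distrib] at hs
  have hA0 : (((m + 1).choose (m - 0) : ℝ)) * ((m + 1).choose 0) *
        (((0 + 1 : ℕ):ℝ) * ((ζ - 1) / 2) ^ 0 * (1 / 2) * ((ζ + 1) / 2) ^ (m - 0 + 1))
      = ((m:ℝ) + 1) / 2 *
        ((((m + 1).choose (m + 1 - 0) : ℝ)) * ((m + 1).choose 0) * ((ζ - 1) / 2) ^ 0 *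
          ((ζ + 1) / 2) ^ (m + 1 - 0)) := by
    simp [Nat.choose_succ_self_right, Nat.choose_self]
    ring
  have hBm : (((m + 1).choose (m - m) : ℝ)) * ((m + 1).choose m) *
        (((ζ - 1) / 2) ^ (m + 1) * (((m - m + 1 : ℕ):ℝ) * ((ζ + 1) / 2) ^ (m - m) * (1 / 2)))
      = ((m:ℝ) + 1) / 2 *
        ((((m + 1).choose (m + 1 - (m + 1)) : ℝ)) * ((m + 1).choose (m + 1)) * ((ζ - 1) / 2) ^ (m + 1) *
          ((ζ + 1) / 2) ^ (m + 1 - (m + 1))) := by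
    simp [Nat.choose_succ_self_right, Nat.choose_self]
    ring
  linarith [hs, hA0, hBm]

/-- For every integer `n ≥ 2` and every `ζ ∈ ℝ`,
`(K_n^{−1,−1})'(ζ) = ((n−1)/2)·J_{n−1}^{0,0}(ζ)`. -/
theorem K1_deriv_eq (n : ℕ) (hn : 2 ≤ n) (ζ : ℝ) :
    deriv (K1 n) ζ = (((n : ℝ) - 1) / 2) * jacobiP (n - 1) 0 0 ζ := by
  obtain ⟨m, rfl⟩ : ∃ m, n = m + 2 := ⟨n - 2, by omega⟩
  have hK : K1 (m+2) = fun x : ℝ => ∑ k ∈ Finset.range (m+1),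
      (((m+1).choose (m - k) : ℝ) * ((m+1).choose k)) *
        (((x-1)/2)^(k+1) * ((x+1)/2)^(m-k+1)) := by
    funext x
    show ((x^2-1)/4) * jacobiP m 1 1 x = _
    rw [jacobiP, Finset.mul_sum]
    refine Finset.sum_congr rfl fun k hk => ?_
    have h1 : (m:ℝ) + 1 = ((m+1 : ℕ):ℝ) := by push_cast; ring
    rw [h1, genBinom_natCast, genBinom_natCast]
    ring
  have hd : HasDerivAt (K1 (m+2))
      (∑ k ∈ Finset.range (m+1),
        (((m+1).choose (m - k) : ℝ) * ((m+1).choose k)) *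
          ((((k+1:ℕ):ℝ) * ((ζ-1)/2)^k * (1/2)) * ((ζ+1)/2)^(m-k+1)
            + ((ζ-1)/2)^(k+1) * (((m-k+1:ℕ):ℝ) * ((ζ+1)/2)^(m-k) * (1/2)))) ζ := by
    rw [hK]
    refine HasDerivAt.fun_sum fun k _ => ?_
    have hu : HasDerivAt (fun x : ℝ => (x-1)/2) (1/2) ζ := by
      simpa using ((hasDerivAt_id ζ).sub_const 1).div_const 2
    have hv : HasDerivAt (fun x : ℝ => (x+1)/2) (1/2) ζ := by
      simpa using ((hasDerivAt_id ζ).add_const 1).div_const 2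
    exact ((hu.pow (k+1)).mul (hv.pow (m-k+1))).const_mul _
  rw [hd.deriv, K1_sum_identity, show m + 2 - 1 = m + 1 from rfl]
  push_cast
  ring
end

section
/- For every integer n ≥ 4 and every ζ ∈ ℝ, the derivative of the generalized Jacobi polynomial of index (−2,−2) satisfies (K_n^{−2,−2})'(ζ) = ((n−3)/2)·K_{n−1}^{−1,−1}(ζ). -/
open scoped BigOperators

/-- Generalized Jacobi polynomial of index `(−2,−2)`. -/
noncomputable def K2 : ℕ → ℝ → ℝ
  | 0, ζ => (1 - ζ) ^ 2 * (2 + ζ) / 4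
  | 1, ζ => (1 - ζ) ^ 2 * (1 + ζ) / 4
  | 2, ζ => (1 + ζ) ^ 2 * (2 - ζ) / 4
  | 3, ζ => (1 + ζ) ^ 2 * (ζ - 1) / 4
  | (n + 4), ζ => ((ζ ^ 2 - 1) / 4) ^ 2 * jacobiP n 2 2 ζ

lemma prod_range_cast (N k : ℕ) :
    (∏ i ∈ Finset.range k, ((N : ℝ) - (i : ℝ))) = (N.descFactorial k : ℝ) := by
  induction k with
  | zero => simp
  | succ k ih =>
    rw [Finset.prod_range_succ, ih, Nat.descFactorial_succ, Nat.cast_mul]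
    rcases le_or_gt k N with h | h
    · rw [Nat.cast_sub h]; ring
    · rw [Nat.descFactorial_eq_zero_iff_lt.mpr h]
      simp [Nat.sub_eq_zero_of_le h.le]

lemma genBinom_nat (N k : ℕ) : genBinom (N : ℝ) k = (N.choose k : ℝ) := by
  rw [genBinom, prod_range_cast, Nat.descFactorial_eq_factorial_mul_choose, Nat.cast_mul,
    mul_comm, mul_div_assoc, div_self (by exact_mod_cast k.factorial_ne_zero), mul_one]

/-- For every integer `n ≥ 4` and every `ζ ∈ ℝ`,
`(K_n^{−2,−2})'(ζ) = ((n−3)/2)·K_{n−1}^{−1,−1}(ζ)`. -/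
theorem K2_deriv_eq (n : ℕ) (hn : 4 ≤ n) (ζ : ℝ) :
    deriv (K2 n) ζ = (((n : ℝ) - 3) / 2) * K1 (n - 1) ζ := by
  obtain ⟨m, rfl⟩ : ∃ m, n = m + 4 := ⟨n - 4, by omega⟩
  clear hn
  -- Step A: rewrite K2 (m+4) as a sum over the antidiagonal
  have hK2 : K2 (m + 4) = fun z : ℝ => ∑ p ∈ Finset.HasAntidiagonal.antidiagonal m,
      ((m + 2).choose p.2 : ℝ) * ((m + 2).choose p.1 : ℝ) *
        (((z - 1) / 2) ^ (p.1 + 2) * ((z + 1) / 2) ^ (p.2 + 2)) := by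
    funext z
    show ((z ^ 2 - 1) / 4) ^ 2 * jacobiP m 2 2 z = _
    rw [jacobiP, Finset.mul_sum, Finset.Nat.sum_antidiagonal_eq_sum_range_succ_mk]
    refine Finset.sum_congr rfl fun k hk => ?_
    have e1 : (m : ℝ) + 2 = ((m + 2 : ℕ) : ℝ) := by push_cast; ring
    rw [e1, genBinom_nat, genBinom_nat]
    ring
  -- Step B: the derivative
  have hu : HasDerivAt (fun z : ℝ => (z - 1) / 2) (1 / 2) ζ := by
    simpa using ((hasDerivAt_id ζ).sub_const 1).div_const 2
  have hv : HasDerivAt (fun z : ℝ => (z + 1) / 2) (1 / 2) ζ := by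
    simpa using ((hasDerivAt_id ζ).add_const 1).div_const 2
  have hD : HasDerivAt (K2 (m + 4))
      (∑ p ∈ Finset.HasAntidiagonal.antidiagonal m,
        ((m + 2).choose p.2 : ℝ) * ((m + 2).choose p.1 : ℝ) *
          ((((p.1 : ℝ) + 2) * ((ζ - 1) / 2) ^ (p.1 + 1) * (1 / 2)) * ((ζ + 1) / 2) ^ (p.2 + 2)
           + ((ζ - 1) / 2) ^ (p.1 + 2) *
              (((p.2 : ℝ) + 2) * ((ζ + 1) / 2) ^ (p.2 + 1) * (1 / 2)))) ζ := by
    rw [hK2]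
    refine HasDerivAt.fun_sum fun p _ => ?_
    have h1 := hu.fun_pow (p.1 + 2)
    have h2 := hv.fun_pow (p.2 + 2)
    have h3 := HasDerivAt.const_mul
      (((m + 2).choose p.2 : ℝ) * ((m + 2).choose p.1 : ℝ)) (h1.fun_mul h2)
    convert h3 using 1
    case e'_4 => rfl
    have e1 : p.1 + 2 - 1 = p.1 + 1 := by omega
    have e2 : p.2 + 2 - 1 = p.2 + 1 := by omega
    rw [e1, e2]
    push_cast
    ring
  rw [hD.deriv]
  -- Step C: rewrite the right-hand side
  have hn1 : m + 4 - 1 = m + 1 + 2 := by omega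
  rw [hn1]
  have hR : (((m + 4 : ℕ) : ℝ) - 3) / 2 * K1 (m + 1 + 2) ζ =
      ∑ q ∈ Finset.HasAntidiagonal.antidiagonal (m + 1),
        ((m : ℝ) + 1) / 2 * (((m + 2).choose q.2 : ℝ) * ((m + 2).choose q.1 : ℝ)) *
          (((ζ - 1) / 2) ^ (q.1 + 1) * ((ζ + 1) / 2) ^ (q.2 + 1)) := by
    show _ * (((ζ ^ 2 - 1) / 4) * jacobiP (m + 1) 1 1 ζ) = _
    rw [jacobiP, Finset.mul_sum, Finset.mul_sum, Finset.Nat.sum_antidiagonal_eq_sum_range_succ_mk]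
    refine Finset.sum_congr rfl fun k hk => ?_
    have e1 : ((m + 1 : ℕ) : ℝ) + 1 = ((m + 2 : ℕ) : ℝ) := by push_cast; ring
    rw [e1, genBinom_nat, genBinom_nat]
    push_cast
    ring
  rw [hR]
  -- Step D: split the RHS sum into two pieces using q.1 + q.2 = m + 1
  have hsplit : ∑ q ∈ Finset.HasAntidiagonal.antidiagonal (m + 1),
        ((m : ℝ) + 1) / 2 * (((m + 2).choose q.2 : ℝ) * ((m + 2).choose q.1 : ℝ)) *
          (((ζ - 1) / 2) ^ (q.1 + 1) * ((ζ + 1) / 2) ^ (q.2 + 1))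
      = (∑ q ∈ Finset.HasAntidiagonal.antidiagonal (m + 1),
          (q.2 : ℝ) / 2 * (((m + 2).choose q.2 : ℝ) * ((m + 2).choose q.1 : ℝ)) *
            (((ζ - 1) / 2) ^ (q.1 + 1) * ((ζ + 1) / 2) ^ (q.2 + 1)))
        + (∑ q ∈ Finset.HasAntidiagonal.antidiagonal (m + 1),
          (q.1 : ℝ) / 2 * (((m + 2).choose q.2 : ℝ) * ((m + 2).choose q.1 : ℝ)) *
            (((ζ - 1) / 2) ^ (q.1 + 1) * ((ζ + 1) / 2) ^ (q.2 + 1))) := by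
    rw [← Finset.sum_add_distrib]
    refine Finset.sum_congr rfl fun q hq => ?_
    have hq' : q.1 + q.2 = m + 1 := Finset.HasAntidiagonal.mem_antidiagonal.mp hq
    have hq'' : (q.1 : ℝ) + (q.2 : ℝ) = (m : ℝ) + 1 := by exact_mod_cast congrArg Nat.cast hq'
    rw [← hq'']
    ring
  rw [hsplit]
  rw [Finset.Nat.sum_antidiagonal_succ'
      (f := fun q : ℕ × ℕ => (q.2 : ℝ) / 2 * (((m + 2).choose q.2 : ℝ) * ((m + 2).choose q.1 : ℝ)) *
        (((ζ - 1) / 2) ^ (q.1 + 1) * ((ζ + 1) / 2) ^ (q.2 + 1))),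
    Finset.Nat.sum_antidiagonal_succ
      (f := fun q : ℕ × ℕ => (q.1 : ℝ) / 2 * (((m + 2).choose q.2 : ℝ) * ((m + 2).choose q.1 : ℝ)) *
        (((ζ - 1) / 2) ^ (q.1 + 1) * ((ζ + 1) / 2) ^ (q.2 + 1)))]
  simp only [Nat.cast_zero, zero_div, zero_mul, zero_add, add_zero]
  rw [← Finset.sum_add_distrib]
  refine Finset.sum_congr rfl fun p hp => ?_
  have hp' : p.1 + p.2 = m := Finset.HasAntidiagonal.mem_antidiagonal.mp hp
  -- the two absorption identities
  have hA : ((m + 2).choose (p.2 + 1) : ℝ) * ((p.2 : ℝ) + 1)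
      = ((m + 2).choose p.2 : ℝ) * ((p.1 : ℝ) + 2) := by
    have h := Nat.choose_succ_right_eq (m + 2) p.2
    have h2 : m + 2 - p.2 = p.1 + 2 := by omega
    rw [h2] at h
    exact_mod_cast congrArg Nat.cast h
  have hB : ((m + 2).choose (p.1 + 1) : ℝ) * ((p.1 : ℝ) + 1)
      = ((m + 2).choose p.1 : ℝ) * ((p.2 : ℝ) + 2) := by
    have h := Nat.choose_succ_right_eq (m + 2) p.1
    have h2 : m + 2 - p.1 = p.2 + 2 := by omega
    rw [h2] at h
    exact_mod_cast congrArg Nat.cast h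
  push_cast
  linear_combination
    (-(((m + 2).choose p.1 : ℝ) / 2 * ((ζ - 1) / 2) ^ (p.1 + 1) * ((ζ + 1) / 2) ^ (p.2 + 2))) * hA
    - (((m + 2).choose p.2 : ℝ) / 2 * ((ζ - 1) / 2) ^ (p.1 + 2) * ((ζ + 1) / 2) ^ (p.2 + 1)) * hB
end

section
/- Define q̂_{m,n}(x̂,ŷ) = ((K_m^{−2,−2})'(x̂)·K_n^{−2,−2}(ŷ), 0) on ℝ². Then: (i) for all integers m, n ≥ 0, the scalar curl satisfies ∇×q̂_{m,n}(x̂,ŷ) = −(K_m^{−2,−2})'(x̂)·(K_n^{−2,−2})'(ŷ); (ii) if m ≥ 1 and n ∈ {1, 3} ∪ {k : k ≥ 4}, then the first component of q̂_{m,n} vanishes whenever ŷ = −1 or ŷ = 1 (and the second component is identically zero), so the tangential trace of q̂_{m,n} vanishes on all four edges of [−1,1]²; (iii) if m, n ∈ {2} ∪ {k : k ≥ 4}, then ∇×q̂_{m,n}(x̂,ŷ) = 0 whenever x̂ ∈ {−1, 1} or ŷ ∈ {−1, 1}; (iv) if m = 1 and n ∈ {2} ∪ {k : k ≥ 4}, then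 ∇×q̂_{1,n}(−1,ŷ) = −(K_n^{−2,−2})'(ŷ) for all ŷ, ∇×q̂_{1,n}(1,ŷ) = 0 for all ŷ, and ∇×q̂_{1,n}(x̂,±1) = 0 for all x̂. -/
open scoped BigOperators

/-- Scalar curl of a planar vector field: `∇×u = ∂u₂/∂x̂ − ∂u₁/∂ŷ`. -/
noncomputable def scurl (u : ℝ × ℝ → ℝ × ℝ) (z : ℝ × ℝ) : ℝ :=
  deriv (fun t => (u (t, z.2)).2) z.1 - deriv (fun t => (u (z.1, t)).1) z.2

/-- `q̂_{m,n}(x̂,ŷ) = ((K_m^{−2,−2})'(x̂)·K_n^{−2,−2}(ŷ), 0)`. -/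
noncomputable def qHat (m n : ℕ) (z : ℝ × ℝ) : ℝ × ℝ :=
  (deriv (K2 m) z.1 * K2 n z.2, 0)

lemma jacobiP_diff (n : ℕ) (α β : ℝ) : Differentiable ℝ (jacobiP n α β) := by
  unfold jacobiP
  apply Differentiable.fun_sum
  intro k _
  fun_prop

lemma K2_eq_0 : K2 0 = fun ζ : ℝ => (1 - ζ) ^ 2 * (2 + ζ) / 4 := by funext ζ; simp [K2]
lemma K2_eq_1 : K2 1 = fun ζ : ℝ => (1 - ζ) ^ 2 * (1 + ζ) / 4 := by funext ζ; simp [K2]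
lemma K2_eq_2 : K2 2 = fun ζ : ℝ => (1 + ζ) ^ 2 * (2 - ζ) / 4 := by funext ζ; simp [K2]
lemma K2_eq_3 : K2 3 = fun ζ : ℝ => (1 + ζ) ^ 2 * (ζ - 1) / 4 := by funext ζ; simp [K2]
lemma K2_eq_4 (n : ℕ) : K2 (n + 4) = fun ζ : ℝ => ((ζ ^ 2 - 1) / 4) ^ 2 * jacobiP n 2 2 ζ := by
  funext ζ; simp [K2]

lemma K2_diff (n : ℕ) : Differentiable ℝ (K2 n) := by
  match n with
  | 0 => rw [K2_eq_0]; fun_prop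
  | 1 => rw [K2_eq_1]; fun_prop
  | 2 => rw [K2_eq_2]; fun_prop
  | 3 => rw [K2_eq_3]; fun_prop
  | n + 4 =>
    rw [K2_eq_4]
    exact (Differentiable.mul (by fun_prop) (jacobiP_diff n 2 2))

lemma deriv_K2_1 (a : ℝ) : deriv (K2 1) a = ((1 - a) ^ 2 - 2 * (1 - a) * (1 + a)) / 4 := by
  have h : HasDerivAt (fun ζ : ℝ => (1 - ζ) ^ 2 * (1 + ζ) / 4)
      (((2 * (1 - a) ^ (2 - 1) * (-1)) * (1 + a) + (1 - a) ^ 2 * 1) / 4) a :=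
    ((((hasDerivAt_id a).const_sub 1).pow 2).mul ((hasDerivAt_id a).const_add 1)).div_const 4
  rw [K2_eq_1, h.deriv]; ring

lemma deriv_K2_2 (a : ℝ) : deriv (K2 2) a = (2 * (1 + a) * (2 - a) - (1 + a) ^ 2) / 4 := by
  have h : HasDerivAt (fun ζ : ℝ => (1 + ζ) ^ 2 * (2 - ζ) / 4)
      (((2 * (1 + a) ^ (2 - 1) * 1) * (2 - a) + (1 + a) ^ 2 * (-1)) / 4) a :=
    ((((hasDerivAt_id a).const_add 1).pow 2).mul ((hasDerivAt_id a).const_sub 2)).div_const 4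
  rw [K2_eq_2, h.deriv]; ring

lemma deriv_K2_4 (n : ℕ) (a : ℝ) (ha : a = 1 ∨ a = -1) : deriv (K2 (n + 4)) a = 0 := by
  have hg : HasDerivAt (fun ζ : ℝ => ((ζ ^ 2 - 1) / 4) ^ 2)
      (2 * ((a ^ 2 - 1) / 4) ^ (2 - 1) * ((2 * a ^ (2 - 1)) / 4)) a :=
    (((hasDerivAt_pow 2 a).sub_const 1).div_const 4).pow 2
  have hJ : HasDerivAt (jacobiP n 2 2) (deriv (jacobiP n 2 2) a) a :=
    ((jacobiP_diff n 2 2).differentiableAt).hasDerivAt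
  have h := hg.fun_mul hJ
  rw [K2_eq_4, h.deriv]
  rcases ha with rfl | rfl <;> norm_num

lemma deriv_K2_edge {n : ℕ} (hn : n = 2 ∨ 4 ≤ n) (a : ℝ) (ha : a = 1 ∨ a = -1) :
    deriv (K2 n) a = 0 := by
  rcases hn with rfl | hn
  · rw [deriv_K2_2]; rcases ha with rfl | rfl <;> ring
  · obtain ⟨k, rfl⟩ : ∃ k, n = k + 4 := ⟨n - 4, by omega⟩
    exact deriv_K2_4 k a ha

lemma K2_edge {n : ℕ} (hn : n = 1 ∨ n = 3 ∨ 4 ≤ n) (a : ℝ) (ha : a = 1 ∨ a = -1) :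
    K2 n a = 0 := by
  rcases hn with rfl | rfl | hn
  · rw [K2_eq_1]; rcases ha with rfl | rfl <;> ring
  · rw [K2_eq_3]; rcases ha with rfl | rfl <;> ring
  · obtain ⟨k, rfl⟩ : ∃ k, n = k + 4 := ⟨n - 4, by omega⟩
    rw [K2_eq_4]; rcases ha with rfl | rfl <;> norm_num

lemma scurl_qHat (m n : ℕ) (z : ℝ × ℝ) :
    scurl (qHat m n) z = -(deriv (K2 m) z.1 * deriv (K2 n) z.2) := by
  unfold scurl qHat
  simp only
  rw [deriv_const, deriv_const_mul _ ((K2_diff n).differentiableAt)]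
  ring

/-- Trace properties of `q̂_{m,n}`:
(i) `∇×q̂_{m,n} = −(K_m^{−2,−2})'(x̂)·(K_n^{−2,−2})'(ŷ)`;
(ii) for `m ≥ 1` and `n ∈ {1,3} ∪ {k ≥ 4}` the tangential trace vanishes on all four edges;
(iii) for `m, n ∈ {2} ∪ {k ≥ 4}` the curl vanishes on all four edges;
(iv) for `m = 1` and `n ∈ {2} ∪ {k ≥ 4}` the curl trace is `−(K_n^{−2,−2})'(ŷ)` on `x̂ = −1`
and vanishes on the other three edges. -/
theorem qHat_traces :
    (∀ (m n : ℕ) (z : ℝ × ℝ),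
      scurl (qHat m n) z = -(deriv (K2 m) z.1 * deriv (K2 n) z.2)) ∧
    (∀ (m n : ℕ), 1 ≤ m → (n = 1 ∨ n = 3 ∨ 4 ≤ n) →
      (∀ xh : ℝ, (qHat m n (xh, -1)).1 = 0 ∧ (qHat m n (xh, 1)).1 = 0) ∧
      (∀ z : ℝ × ℝ, (qHat m n z).2 = 0)) ∧
    (∀ (m n : ℕ), (m = 2 ∨ 4 ≤ m) → (n = 2 ∨ 4 ≤ n) →
      ∀ z : ℝ × ℝ, (z.1 = -1 ∨ z.1 = 1 ∨ z.2 = -1 ∨ z.2 = 1) → scurl (qHat m n) z = 0) ∧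
    (∀ n : ℕ, (n = 2 ∨ 4 ≤ n) →
      (∀ yh : ℝ, scurl (qHat 1 n) (-1, yh) = -(deriv (K2 n) yh)) ∧
      (∀ yh : ℝ, scurl (qHat 1 n) (1, yh) = 0) ∧
      (∀ xh : ℝ, scurl (qHat 1 n) (xh, -1) = 0 ∧ scurl (qHat 1 n) (xh, 1) = 0)) := by
  
  refine ⟨scurl_qHat, ?_, ?_, ?_⟩
  · intro m n _ hn
    refine ⟨fun xh => ⟨?_, ?_⟩, fun z => rfl⟩
    · show deriv (K2 m) xh * K2 n (-1) = 0
      rw [K2_edge hn (-1) (Or.inr rfl), mul_zero]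
    · show deriv (K2 m) xh * K2 n 1 = 0
      rw [K2_edge hn 1 (Or.inl rfl), mul_zero]
  · intro m n hm hn z hz
    rw [scurl_qHat]
    rcases hz with h | h | h | h
    · rw [deriv_K2_edge hm z.1 (Or.inr h), zero_mul, neg_zero]
    · rw [deriv_K2_edge hm z.1 (Or.inl h), zero_mul, neg_zero]
    · rw [deriv_K2_edge hn z.2 (Or.inr h), mul_zero, neg_zero]
    · rw [deriv_K2_edge hn z.2 (Or.inl h), mul_zero, neg_zero]
  · intro n hn
    refine ⟨fun yh => ?_, fun yh => ?_, fun xh => ⟨?_, ?_⟩⟩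
    · rw [scurl_qHat]
      show -(deriv (K2 1) (-1) * deriv (K2 n) yh) = _
      rw [deriv_K2_1]; ring
    · rw [scurl_qHat]
      show -(deriv (K2 1) 1 * deriv (K2 n) yh) = 0
      rw [deriv_K2_1]; ring
    · rw [scurl_qHat]
      show -(deriv (K2 1) xh * deriv (K2 n) (-1)) = 0
      rw [deriv_K2_edge hn (-1) (Or.inr rfl), mul_zero, neg_zero]
    · rw [scurl_qHat]
      show -(deriv (K2 1) xh * deriv (K2 n) 1) = 0
      rw [deriv_K2_edge hn 1 (Or.inl rfl), mul_zero, neg_zero]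
end

section
/- Let P₁,…,P₄ ∈ ℝ² and let J be the Jacobian determinant of the associated bilinear map. For n ∈ {2} ∪ {k : k ≥ 4}, define the curl edge mode ψ̂_{1,n}(x̂,ŷ) = J(x̂,ŷ)·K_1^{−2,−2}(x̂)·(0, (K_n^{−2,−2})'(ŷ)). Then: (i) the first component of ψ̂_{1,n} is identically zero, and the second component vanishes whenever x̂ = −1 or x̂ = 1, so its tangential trace vanishes on all four edges of [−1,1]²; (ii) ∇×ψ̂_{1,n}(−1,ŷ) = J(−1,ŷ)·(K_n^{−2,−2})'(ŷ) for all ŷ; (iii) ∇×ψ̂_{1,n}(1,ŷ) = 0 for all ŷ; (iv) ∇×ψ̂_{1,n}(x̂,±1) = 0 for all x̂. -/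
open scoped BigOperators

/-- Entry `B₁₁` of the Jacobian matrix of the bilinear map: `(x₂₁(1−ŷ) + x₃₄(1+ŷ))/4`. -/
noncomputable def B11 (x1 x2 x3 x4 yh : ℝ) : ℝ :=
  ((x2 - x1) * (1 - yh) + (x3 - x4) * (1 + yh)) / 4

/-- Entry `B₁₂`: `(x₄₁(1−x̂) + x₃₂(1+x̂))/4`. -/
noncomputable def B12 (x1 x2 x3 x4 xh : ℝ) : ℝ :=
  ((x4 - x1) * (1 - xh) + (x3 - x2) * (1 + xh)) / 4

/-- Entry `B₂₁`: `(y₂₁(1−ŷ) + y₃₄(1+ŷ))/4`. -/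
noncomputable def B21 (y1 y2 y3 y4 yh : ℝ) : ℝ :=
  ((y2 - y1) * (1 - yh) + (y3 - y4) * (1 + yh)) / 4

/-- Entry `B₂₂`: `(y₄₁(1−x̂) + y₃₂(1+x̂))/4`. -/
noncomputable def B22 (y1 y2 y3 y4 xh : ℝ) : ℝ :=
  ((y4 - y1) * (1 - xh) + (y3 - y2) * (1 + xh)) / 4

/-- The Jacobian determinant `J(x̂,ŷ) = det B(x̂,ŷ)` of the bilinear map. -/
noncomputable def Jdet (x1 x2 x3 x4 y1 y2 y3 y4 xh yh : ℝ) : ℝ :=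
  B11 x1 x2 x3 x4 yh * B22 y1 y2 y3 y4 xh - B12 x1 x2 x3 x4 xh * B21 y1 y2 y3 y4 yh

/-- Curl edge mode `ψ̂_{1,n}(x̂,ŷ) = J(x̂,ŷ)·K_1^{−2,−2}(x̂)·(0, (K_n^{−2,−2})'(ŷ))`. -/
noncomputable def psiCurl1 (x1 x2 x3 x4 y1 y2 y3 y4 : ℝ) (n : ℕ) (z : ℝ × ℝ) : ℝ × ℝ :=
  (Jdet x1 x2 x3 x4 y1 y2 y3 y4 z.1 z.2 * K2 1 z.1 * 0,
   Jdet x1 x2 x3 x4 y1 y2 y3 y4 z.1 z.2 * K2 1 z.1 * deriv (K2 n) z.2)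


section CurlAux

private lemma keyDeriv (P Q c x0 : ℝ) :
    HasDerivAt (fun t => (P + Q * t) * ((1 - t) ^ 2 * (1 + t) / 4) * c)
      ((Q * ((1 - x0) ^ 2 * (1 + x0) / 4) +
        (P + Q * x0) * ((-2 * (1 - x0) * (1 + x0) + (1 - x0) ^ 2) / 4)) * c) x0 := by
  have h1 : HasDerivAt (fun t : ℝ => P + Q * t) Q x0 := by
    simpa using ((hasDerivAt_id x0).const_mul Q).const_add P
  have ha : HasDerivAt (fun t : ℝ => 1 - t) (-1) x0 := by
    simpa using (hasDerivAt_id x0).const_sub 1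
  have hb : HasDerivAt (fun t : ℝ => 1 + t) 1 x0 := by
    simpa using (hasDerivAt_id x0).const_add 1
  have h2 := ((ha.fun_pow 2).fun_mul hb).div_const 4
  have := (h1.fun_mul h2).mul_const c
  exact this.congr_deriv (by ring)

private lemma jacobiP_diff_s9 (m : ℕ) (x : ℝ) :
    DifferentiableAt ℝ (fun ζ => jacobiP m 2 2 ζ) x := by
  unfold jacobiP; fun_prop

private lemma K2_two_deriv (x : ℝ) (hx : x = 1 ∨ x = -1) : deriv (K2 2) x = 0 := by
  have h : HasDerivAt (K2 2) ((2 * (1 + x) * (2 - x) + (1 + x) ^ 2 * (-1)) / 4) x := by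
    have ha : HasDerivAt (fun t : ℝ => 1 + t) 1 x := by
      simpa using (hasDerivAt_id x).const_add 1
    have hb : HasDerivAt (fun t : ℝ => 2 - t) (-1) x := by
      simpa using (hasDerivAt_id x).const_sub 2
    have h2 := ((ha.fun_pow 2).fun_mul hb).div_const 4
    have he : K2 2 = fun ζ : ℝ => (1 + ζ) ^ 2 * (2 - ζ) / 4 := by funext ζ; simp [K2]
    rw [he]
    exact h2.congr_deriv (by ring)
  rw [h.deriv]
  rcases hx with rfl | rfl <;> norm_num

private lemma K2_hi_deriv (m : ℕ) (x : ℝ) (hx : x = 1 ∨ x = -1) :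
    deriv (K2 (m + 4)) x = 0 := by
  have h1 : HasDerivAt (fun ζ : ℝ => ((ζ ^ 2 - 1) / 4) ^ 2)
      (2 * ((x ^ 2 - 1) / 4) * (2 * x / 4)) x := by
    have := (((hasDerivAt_pow 2 x).sub_const 1).div_const 4).fun_pow 2
    exact this.congr_deriv (by ring)
  have h2 := (jacobiP_diff_s9 m x).hasDerivAt
  have h := h1.fun_mul h2
  have he : K2 (m + 4) = fun ζ : ℝ => ((ζ ^ 2 - 1) / 4) ^ 2 * jacobiP m 2 2 ζ := by
    funext ζ; simp [K2]
  rw [he, h.deriv]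
  rcases hx with rfl | rfl <;> norm_num

private lemma JdetK_funeq (x1 x2 x3 x4 y1 y2 y3 y4 yh c : ℝ) :
    (fun t => Jdet x1 x2 x3 x4 y1 y2 y3 y4 t yh * K2 1 t * c) =
      fun t => (Jdet x1 x2 x3 x4 y1 y2 y3 y4 0 yh +
        (Jdet x1 x2 x3 x4 y1 y2 y3 y4 1 yh - Jdet x1 x2 x3 x4 y1 y2 y3 y4 0 yh) * t) *
          ((1 - t) ^ 2 * (1 + t) / 4) * c := by
  funext t
  simp only [Jdet, B11, B12, B21, B22, K2]
  ring

private lemma JdetK_deriv_neg_one (x1 x2 x3 x4 y1 y2 y3 y4 yh c : ℝ) :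
    deriv (fun t => Jdet x1 x2 x3 x4 y1 y2 y3 y4 t yh * K2 1 t * c) (-1) =
      Jdet x1 x2 x3 x4 y1 y2 y3 y4 (-1) yh * c := by
  rw [JdetK_funeq, (keyDeriv _ _ _ _).deriv]
  simp only [Jdet, B11, B12, B21, B22]
  ring

private lemma JdetK_deriv_one (x1 x2 x3 x4 y1 y2 y3 y4 yh c : ℝ) :
    deriv (fun t => Jdet x1 x2 x3 x4 y1 y2 y3 y4 t yh * K2 1 t * c) 1 = 0 := by
  rw [JdetK_funeq, (keyDeriv _ _ _ _).deriv]
  ring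

end CurlAux

/-- For `n ∈ {2} ∪ {k ≥ 4}`: (i) the tangential trace of `ψ̂_{1,n}` vanishes on all four
edges (first component identically zero, second component vanishing at `x̂ = ±1`);
(ii) `∇×ψ̂_{1,n}(−1,ŷ) = J(−1,ŷ)·(K_n^{−2,−2})'(ŷ)`; (iii) `∇×ψ̂_{1,n}(1,ŷ) = 0`;
(iv) `∇×ψ̂_{1,n}(x̂,±1) = 0`. -/
theorem curl_edge_mode_gamma1 (x1 x2 x3 x4 y1 y2 y3 y4 : ℝ) (n : ℕ)
    (hn : n = 2 ∨ 4 ≤ n) :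
    (∀ z : ℝ × ℝ, (psiCurl1 x1 x2 x3 x4 y1 y2 y3 y4 n z).1 = 0) ∧
    (∀ yh : ℝ, (psiCurl1 x1 x2 x3 x4 y1 y2 y3 y4 n (-1, yh)).2 = 0 ∧
      (psiCurl1 x1 x2 x3 x4 y1 y2 y3 y4 n (1, yh)).2 = 0) ∧
    (∀ yh : ℝ, scurl (psiCurl1 x1 x2 x3 x4 y1 y2 y3 y4 n) (-1, yh) =
      Jdet x1 x2 x3 x4 y1 y2 y3 y4 (-1) yh * deriv (K2 n) yh) ∧
    (∀ yh : ℝ, scurl (psiCurl1 x1 x2 x3 x4 y1 y2 y3 y4 n) (1, yh) = 0) ∧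
    (∀ xh : ℝ, scurl (psiCurl1 x1 x2 x3 x4 y1 y2 y3 y4 n) (xh, -1) = 0 ∧
      scurl (psiCurl1 x1 x2 x3 x4 y1 y2 y3 y4 n) (xh, 1) = 0) := by
  have hK2d : deriv (K2 n) 1 = 0 ∧ deriv (K2 n) (-1) = 0 := by
    rcases hn with rfl | hn
    · exact ⟨K2_two_deriv 1 (Or.inl rfl), K2_two_deriv (-1) (Or.inr rfl)⟩
    · obtain ⟨m, rfl⟩ : ∃ m, n = m + 4 := ⟨n - 4, by omega⟩
      exact ⟨K2_hi_deriv m 1 (Or.inl rfl), K2_hi_deriv m (-1) (Or.inr rfl)⟩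
  refine ⟨fun z => by simp [psiCurl1], fun yh => ⟨by norm_num [psiCurl1, K2],
    by norm_num [psiCurl1, K2]⟩, ?_, ?_, ?_⟩
  · intro yh
    unfold scurl
    simp only [psiCurl1, mul_zero, deriv_const, sub_zero]
    exact JdetK_deriv_neg_one x1 x2 x3 x4 y1 y2 y3 y4 yh _
  · intro yh
    unfold scurl
    simp only [psiCurl1, mul_zero, deriv_const, sub_zero]
    exact JdetK_deriv_one x1 x2 x3 x4 y1 y2 y3 y4 yh _
  · intro xh
    constructor <;>
    · unfold scurl
      simp only [psiCurl1, hK2d.1, hK2d.2, mul_zero, deriv_const, sub_zero]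
end
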